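/- Let m ≥ 6 be an integer with 3 dividing m, and let A = (a_1, …, a_m) be a sequence of elements of Z_3 such that a_1 + ⋯ + a_m = 0. Then either A is a constant sequence, or for every c ∈ Z_3 there exist pairwise distinct indices i, j, k ∈ {1, …, m} such that a_i + a_j + a_k = c. -/
import Mathlib


open Finset

lemma two_of {m : ℕ} (a : Fin m → ZMod 3) {x : ZMod 3}
    (h : 2 ≤ (univ.filter (fun i => a i = x)).card) :
    ∃ i j : Fin m, i ≠ j ∧ a i = x ∧ a j = x := by
  obtain ⟨i, hi, j, hj, hij⟩ := Finset.one_lt_card.mp h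
  simp only [mem_filter] at hi hj
  exact ⟨i, j, hij, hi.2, hj.2⟩

lemma three_of {m : ℕ} (a : Fin m → ZMod 3) {x : ZMod 3}
    (h : 3 ≤ (univ.filter (fun i => a i = x)).card) :
    ∃ i j k : Fin m, i ≠ j ∧ i ≠ k ∧ j ≠ k ∧ a i = x ∧ a j = x ∧ a k = x := by
  obtain ⟨i, hi, j, hj, k, hk, hij, hik, hjk⟩ := Finset.two_lt_card.mp h
  simp only [mem_filter] at hi hj hk
  exact ⟨i, j, k, hij, hik, hjk, hi.2, hj.2, hk.2⟩

lemma div_count {m : ℕ} (hdvd : 3 ∣ m) (a : Fin m → ZMod 3) (hsum : ∑ i, a i = 0)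
    (x y : ZMod 3) (hxy : x ≠ y) (hmem : ∀ i, a i = x ∨ a i = y) :
    3 ∣ (univ.filter (fun i => a i = y)).card := by
  have hmz : (m : ZMod 3) = 0 := (ZMod.natCast_eq_zero_iff m 3).mpr hdvd
  have key : ∑ i, (a i - x) = 0 := by
    rw [Finset.sum_sub_distrib, hsum, Finset.sum_const, zero_sub, Finset.card_univ,
      Fintype.card_fin, nsmul_eq_mul, hmz, zero_mul, neg_zero]
  rw [← Finset.sum_filter_add_sum_filter_not univ (fun i => a i = y)] at key
  have h1 : ∑ i ∈ univ.filter (fun i => a i = y), (a i - x)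
      = ((univ.filter (fun i => a i = y)).card : ZMod 3) * (y - x) := by
    rw [Finset.sum_congr rfl (fun i hi => by
      rw [(Finset.mem_filter.mp hi).2]), Finset.sum_const, nsmul_eq_mul]
  have h2 : ∑ i ∈ univ.filter (fun i => ¬ a i = y), (a i - x) = 0 := by
    apply Finset.sum_eq_zero
    intro i hi
    have := (Finset.mem_filter.mp hi).2
    rcases hmem i with h | h
    · rw [h, sub_self]
    · exact absurd h this
  rw [h1, h2, add_zero] at key
  have hyx : y - x ≠ 0 := sub_ne_zero.mpr (Ne.symm hxy)
  have : ((univ.filter (fun i => a i = y)).card : ZMod 3) = 0 := by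
    rcases mul_eq_zero.mp key with h | h
    · exact h
    · exact absurd h hyx
  exact (ZMod.natCast_eq_zero_iff _ 3).mp this

theorem stmt19 (m : ℕ) (hm : 6 ≤ m) (hdvd : 3 ∣ m)
    (a : Fin m → ZMod 3) (hsum : ∑ i, a i = 0) :
    (∀ i j : Fin m, a i = a j) ∨
    (∀ c : ZMod 3, ∃ i j k : Fin m, i ≠ j ∧ i ≠ k ∧ j ≠ k ∧ a i + a j + a k = c) := by
  by_cases hconst : ∀ i j : Fin m, a i = a j
  · exact Or.inl hconst
  right
  push_neg at hconst
  obtain ⟨p, q, hpq⟩ := hconst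
  by_cases hz : ∃ r, a r = -(a p + a q)
  · -- all three values appear
    have hall : ∀ v : ZMod 3, ∃ i, a i = v := by
      have aux : ∀ x y v : ZMod 3, x ≠ y → (v = x ∨ v = y ∨ v = -(x + y)) := by decide
      intro v
      rcases aux (a p) (a q) v hpq with h | h | h
      · exact ⟨p, h.symm⟩
      · exact ⟨q, h.symm⟩
      · obtain ⟨r, hr⟩ := hz
        exact ⟨r, by rw [hr, h]⟩
    have hbig : ∃ w : ZMod 3, 2 ≤ (univ.filter (fun i => a i = w)).card := by
      by_contra h
      push_neg at h
      have hcard : m = ∑ w : ZMod 3, (univ.filter (fun i => a i = w)).card := by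
        simpa using Finset.card_eq_sum_card_fiberwise
          (fun i (_ : i ∈ (univ : Finset (Fin m))) => Finset.mem_univ (a i))
      have : m ≤ ∑ _w : ZMod 3, 1 := by
        rw [hcard]
        exact Finset.sum_le_sum fun w _ => Nat.lt_succ_iff.mp (h w)
      simp at this
      omega
    intro c
    by_cases hc : c = 0
    · obtain ⟨i, hi⟩ := hall 0
      obtain ⟨j, hj⟩ := hall 1
      obtain ⟨k, hk⟩ := hall 2
      refine ⟨i, j, k, ?_, ?_, ?_, ?_⟩
      · intro h; rw [h, hj] at hi; exact absurd hi (by decide)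
      · intro h; rw [h, hk] at hi; exact absurd hi (by decide)
      · intro h; rw [h, hk] at hj; exact absurd hj (by decide)
      · rw [hi, hj, hk, hc]; decide
    · obtain ⟨w, hw⟩ := hbig
      obtain ⟨i, j, hij, hi, hj⟩ := two_of a hw
      obtain ⟨k, hk⟩ := hall (c - w - w)
      have hne : c - w - w ≠ w := by
        intro h
        apply hc
        have : c = w + w + w := by linear_combination h
        rw [this]
        have : ∀ w : ZMod 3, w + w + w = 0 := by decide
        exact this w
      refine ⟨i, j, k, hij, ?_, ?_, ?_⟩
      · intro h; rw [h, hk] at hi; exact hne hi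
      · intro h; rw [h, hk] at hj; exact hne hj
      · rw [hi, hj, hk]; ring
  · -- only two values appear
    push_neg at hz
    have hmem : ∀ i, a i = a p ∨ a i = a q := by
      have aux : ∀ x y v : ZMod 3, x ≠ y → v ≠ -(x + y) → (v = x ∨ v = y) := by decide
      intro i
      exact aux (a p) (a q) (a i) hpq (hz i)
    have hmem' : ∀ i, a i = a q ∨ a i = a p := fun i => (hmem i).symm
    have hdq : 3 ∣ (univ.filter (fun i => a i = a q)).card :=
      div_count hdvd a hsum (a p) (a q) hpq hmem
    have hdp : 3 ∣ (univ.filter (fun i => a i = a p)).card :=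
      div_count hdvd a hsum (a q) (a p) (Ne.symm hpq) hmem'
    have hp1 : 1 ≤ (univ.filter (fun i => a i = a p)).card :=
      Finset.card_pos.mpr ⟨p, Finset.mem_filter.mpr ⟨Finset.mem_univ p, rfl⟩⟩
    have hq1 : 1 ≤ (univ.filter (fun i => a i = a q)).card :=
      Finset.card_pos.mpr ⟨q, Finset.mem_filter.mpr ⟨Finset.mem_univ q, rfl⟩⟩
    have hp3 : 3 ≤ (univ.filter (fun i => a i = a p)).card := by omega
    have hq3 : 3 ≤ (univ.filter (fun i => a i = a q)).card := by omega
    intro c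
    have aux : ∀ x y c : ZMod 3, x ≠ y →
        (c = x + x + x ∨ c = x + x + y ∨ c = x + y + y) := by decide
    rcases aux (a p) (a q) c hpq with h | h | h
    · obtain ⟨i, j, k, hij, hik, hjk, hi, hj, hk⟩ := three_of a hp3
      exact ⟨i, j, k, hij, hik, hjk, by rw [hi, hj, hk, h]⟩
    · obtain ⟨i, j, hij, hi, hj⟩ :=
        two_of a (by omega : 2 ≤ (univ.filter (fun i => a i = a p)).card)
      exact ⟨i, j, q, hij,
        fun h' => hpq (by rw [← hi, h']),
        fun h' => hpq (by rw [← hj, h']),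
        by rw [hi, hj, h]⟩
    · obtain ⟨j, k, hjk, hj, hk⟩ := two_of a (by omega : 2 ≤ (univ.filter (fun i => a i = a q)).card)
      exact ⟨p, j, k,
        fun h' => hpq (by rw [h', hj]),
        fun h' => hpq (by rw [h', hk]),
        hjk, by rw [hj, hk, h]⟩
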